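/- With A = R(σ,f) a GWA satisfying Hypothesis 2.1, β a root of f of multiplicity one, h = z−β, g = f h⁻¹, and M = hA + xA: the endomorphism ring B = {p ∈ Q_gr(A) : pM ⊆ M} contains the elements X = x, Y = x⁻¹σ(h)g, Z = z, and these satisfy the defining relations of the GWA R(σ, f′) with f′ = σ(h)g, namely XY = f′(Z), YX = σ⁻¹(f′)(Z), XZ = σ(Z)X, YZ = σ⁻¹(Z)Y. -/
import Mathlib


/- Abstract model of the graded quotient division ring `Q_gr(A) = k(z)[x, x⁻¹; σ]` of the
GWA `A = k[z](σ, f)` with `σ(z) = z + 1`:  a ring `Q` together with an embedding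
`φ : k(z) → Q`, a unit `x` with `x·φ(q) = φ(σ(q))·x`, such that every element of `Q` is
uniquely a finite sum `Σ φ(q_i)·xⁱ`.  Inside `Q`, the GWA `A` is the subring generated by
`φ(k[z])`, `x` and `y = φ(σ⁻¹(f))·x⁻¹`. -/

open Polynomial

/-- The shift `σ^i` on polynomials: `(σ^i p)(z) = p(z + i)`. -/
noncomputable def pshift (k : Type) [Field k] (i : ℤ) (p : k[X]) : k[X] :=
  p.comp (X + C (i : k))

/-- The element `y = φ(σ⁻¹(f)) · x⁻¹` of `Q`. -/
noncomputable def gwaY (k : Type) [Field k] (Q : Type) [Ring Q]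
    (σ : RatFunc k ≃+* RatFunc k) (φ : RatFunc k →+* Q) (x : Qˣ) (f : k[X]) : Q :=
  φ (σ.symm (algebraMap k[X] (RatFunc k) f)) * ((x⁻¹ : Qˣ) : Q)

/-- The copy of the GWA `A = k[z](σ, f)` inside `Q`: the subring generated by the image
of `k[z]`, by `x`, and by `y`. -/
noncomputable def gwaSubring (k : Type) [Field k] (Q : Type) [Ring Q]
    (σ : RatFunc k ≃+* RatFunc k) (φ : RatFunc k →+* Q) (x : Qˣ) (f : k[X]) : Subring Q :=
  Subring.closure
    ({(x : Q), gwaY k Q σ φ x f} ∪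
      Set.range fun p : k[X] => φ (algebraMap k[X] (RatFunc k) p))

section Aux

variable {k : Type} [Field k] {Q : Type} [Ring Q]
variable (σ : RatFunc k ≃+* RatFunc k) (φ : RatFunc k →+* Q) (x : Qˣ)

local notation "Ψ" p => φ (algebraMap (Polynomial k) (RatFunc k) p)

theorem aux_symm (hσ : ∀ p : k[X], σ (algebraMap k[X] (RatFunc k) p)
      = algebraMap k[X] (RatFunc k) (p.comp (X + 1))) (p : k[X]) :
    σ.symm (algebraMap k[X] (RatFunc k) p)
      = algebraMap k[X] (RatFunc k) (p.comp (X - 1)) := by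
  apply σ.injective
  rw [RingEquiv.apply_symm_apply, hσ, Polynomial.comp_assoc]
  simp [sub_comp]

theorem aux_xinv (hx : ∀ q : RatFunc k, (x : Q) * φ q = φ (σ q) * (x : Q))
    (q : RatFunc k) :
    ((x⁻¹ : Qˣ) : Q) * φ q = φ (σ.symm q) * ((x⁻¹ : Qˣ) : Q) := by
  have h := hx (σ.symm q)
  rw [RingEquiv.apply_symm_apply] at h
  refine x.isUnit.mul_right_injective ?_
  show (x:Q) * (((x⁻¹ : Qˣ) : Q) * φ q) = (x:Q) * (φ (σ.symm q) * ((x⁻¹ : Qˣ) : Q))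
  rw [← mul_assoc, ← mul_assoc, Units.mul_inv, one_mul, h, mul_assoc, Units.mul_inv, mul_one]

theorem aux_xinvψ (hσ : ∀ p : k[X], σ (algebraMap k[X] (RatFunc k) p)
      = algebraMap k[X] (RatFunc k) (p.comp (X + 1)))
    (hx : ∀ q : RatFunc k, (x : Q) * φ q = φ (σ q) * (x : Q)) (p : k[X]) :
    (((x⁻¹ : Qˣ) : Q) * Ψ p) = (Ψ (p.comp (X - 1))) * ((x⁻¹ : Qˣ) : Q) := by
  rw [aux_xinv σ φ x hx, aux_symm σ hσ]

theorem aux_xψ (hσ : ∀ p : k[X], σ (algebraMap k[X] (RatFunc k) p)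
      = algebraMap k[X] (RatFunc k) (p.comp (X + 1)))
    (hx : ∀ q : RatFunc k, (x : Q) * φ q = φ (σ q) * (x : Q)) (p : k[X]) :
    ((x : Q) * Ψ p) = (Ψ (p.comp (X + 1))) * (x : Q) := by
  rw [hx, hσ]

theorem aux_ψx (hσ : ∀ p : k[X], σ (algebraMap k[X] (RatFunc k) p)
      = algebraMap k[X] (RatFunc k) (p.comp (X + 1)))
    (hx : ∀ q : RatFunc k, (x : Q) * φ q = φ (σ q) * (x : Q)) (p : k[X]) :
    ((Ψ p) * (x : Q)) = (x : Q) * Ψ (p.comp (X - 1)) := by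
  rw [aux_xψ σ φ x hσ hx, Polynomial.comp_assoc]
  simp [sub_comp]

-- membership lemmas
theorem aux_memψ (f : k[X]) (p : k[X]) : (Ψ p) ∈ gwaSubring k Q σ φ x f :=
  Subring.subset_closure (Set.mem_union_right _ ⟨p, rfl⟩)

theorem aux_memx (f : k[X]) : (x : Q) ∈ gwaSubring k Q σ φ x f :=
  Subring.subset_closure (Set.mem_union_left _ (by simp))

theorem aux_memy (f : k[X]) : gwaY k Q σ φ x f ∈ gwaSubring k Q σ φ x f :=
  Subring.subset_closure (Set.mem_union_left _ (by simp [Set.mem_insert_iff]))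

end Aux

/-- With `β` a simple root of `f`, `h = z − β`, `g = f/h` and
`M = hA + xA`, the endomorphism ring `B = {p ∈ Q_gr(A) : pM ⊆ M}` contains
`X = x`, `Y = x⁻¹·σ(h)·g` and `Z = z`, and these satisfy the defining relations of the
GWA `R(σ, f′)` with `f′ = σ(h)g`:  `XY = f′`, `YX = σ⁻¹(f′)`, `XZ = σ(Z)X`,
`YZ = σ⁻¹(Z)Y`. -/
theorem endomorphism_ring_is_GWA
    (k : Type) [Field k] [CharZero k] [IsAlgClosed k]
    (Q : Type) [Ring Q]
    (σ : RatFunc k ≃+* RatFunc k)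
    (hσ : ∀ p : k[X], σ (algebraMap k[X] (RatFunc k) p)
        = algebraMap k[X] (RatFunc k) (p.comp (X + 1)))
    (φ : RatFunc k →+* Q) (hφ : Function.Injective φ)
    (x : Qˣ)
    (hx : ∀ q : RatFunc k, (x : Q) * φ q = φ (σ q) * (x : Q))
    (hbasis : ∀ w : Q, ∃! c : ℤ →₀ RatFunc k,
        w = c.sum fun i q => φ q * ((x ^ i : Qˣ) : Q))
    (f : k[X]) (hf : f.Monic) (hf0 : f ≠ 0)
    (β : k) (g : k[X]) (hfact : f = (X - C β) * g) (hsimpleroot : ¬ (X - C β) ∣ g)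
    (M : AddSubgroup Q)
    (hM : ∀ w : Q, w ∈ M ↔
        ∃ a ∈ gwaSubring k Q σ φ x f, ∃ b ∈ gwaSubring k Q σ φ x f,
          w = φ (algebraMap k[X] (RatFunc k) (X - C β)) * a + (x : Q) * b) :
    (x : Q) ∈ {p : Q | ∀ w ∈ M, p * w ∈ M} ∧
      ((x⁻¹ : Qˣ) : Q) * φ (algebraMap k[X] (RatFunc k) ((X - C (β - 1)) * g))
          ∈ {p : Q | ∀ w ∈ M, p * w ∈ M} ∧
        φ (algebraMap k[X] (RatFunc k) X) ∈ {p : Q | ∀ w ∈ M, p * w ∈ M} ∧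
          (x : Q) * (((x⁻¹ : Qˣ) : Q) * φ (algebraMap k[X] (RatFunc k) ((X - C (β - 1)) * g)))
              = φ (algebraMap k[X] (RatFunc k) ((X - C (β - 1)) * g)) ∧
            (((x⁻¹ : Qˣ) : Q) * φ (algebraMap k[X] (RatFunc k) ((X - C (β - 1)) * g))) * (x : Q)
                = φ (algebraMap k[X] (RatFunc k) (((X - C (β - 1)) * g).comp (X - 1))) ∧
              (x : Q) * φ (algebraMap k[X] (RatFunc k) X)
                  = φ (algebraMap k[X] (RatFunc k) (X + 1)) * (x : Q) ∧
                (((x⁻¹ : Qˣ) : Q) * φ (algebraMap k[X] (RatFunc k) ((X - C (β - 1)) * g)))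
                      * φ (algebraMap k[X] (RatFunc k) X)
                    = φ (algebraMap k[X] (RatFunc k) (X - 1)) *
                      (((x⁻¹ : Qˣ) : Q) *
                        φ (algebraMap k[X] (RatFunc k) ((X - C (β - 1)) * g))) := by
  have hmemψ : ∀ p : k[X],
      φ (algebraMap k[X] (RatFunc k) p) ∈ gwaSubring k Q σ φ x f :=
    fun p => aux_memψ σ φ x f p
  have hmemx : (x : Q) ∈ gwaSubring k Q σ φ x f := aux_memx σ φ x f
  have hmemy : gwaY k Q σ φ x f ∈ gwaSubring k Q σ φ x f := aux_memy σ φ x f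
  have hxψ := aux_xψ σ φ x hσ hx
  have hψx := aux_ψx σ φ x hσ hx
  have hxinvψ := aux_xinvψ σ φ x hσ hx
  have hmul : ∀ p q : k[X],
      φ (algebraMap k[X] (RatFunc k) p) * φ (algebraMap k[X] (RatFunc k) q)
        = φ (algebraMap k[X] (RatFunc k) (p * q)) := fun p q => by
    rw [map_mul, map_mul]
  have hc1 : ((X : k[X]) - C (β - 1)).comp (X - 1) = X - C β := by
    simp [sub_comp, C_sub]
  have hc2 : (((X : k[X]) - C (β - 1)) * g).comp (X - 1) = (X - C β) * g.comp (X - 1) := by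
    rw [mul_comp, hc1]
  have hyeq : ((x⁻¹ : Qˣ) : Q) * φ (algebraMap k[X] (RatFunc k) f) = gwaY k Q σ φ x f := by
    rw [hxinvψ, gwaY, aux_symm σ hσ]
  -- the four relations
  have R1 : (x : Q) * (((x⁻¹ : Qˣ) : Q) * φ (algebraMap k[X] (RatFunc k) ((X - C (β - 1)) * g)))
      = φ (algebraMap k[X] (RatFunc k) ((X - C (β - 1)) * g)) := by
    rw [← mul_assoc, Units.mul_inv, one_mul]
  have R2 : (((x⁻¹ : Qˣ) : Q) * φ (algebraMap k[X] (RatFunc k) ((X - C (β - 1)) * g))) * (x : Q)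
      = φ (algebraMap k[X] (RatFunc k) (((X - C (β - 1)) * g).comp (X - 1))) := by
    rw [hxinvψ, mul_assoc, Units.inv_mul, mul_one]
  have R3 : (x : Q) * φ (algebraMap k[X] (RatFunc k) X)
      = φ (algebraMap k[X] (RatFunc k) (X + 1)) * (x : Q) := by
    rw [hxψ, X_comp]
  have R4 : (((x⁻¹ : Qˣ) : Q) * φ (algebraMap k[X] (RatFunc k) ((X - C (β - 1)) * g)))
        * φ (algebraMap k[X] (RatFunc k) X)
      = φ (algebraMap k[X] (RatFunc k) (X - 1)) *
        (((x⁻¹ : Qˣ) : Q) * φ (algebraMap k[X] (RatFunc k) ((X - C (β - 1)) * g))) := by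
    rw [hxinvψ, mul_assoc, hxinvψ, X_comp, ← mul_assoc, ← mul_assoc,
      hmul, hmul, mul_comm ((((X : k[X]) - C (β - 1)) * g).comp (X - 1))]
  refine ⟨?_, ?_, ?_, R1, R2, R3, R4⟩
  · -- X = x
    intro w hw
    obtain ⟨a, ha, b, hb, rfl⟩ := (hM w).mp hw
    rw [hM]
    refine ⟨(x : Q) * a, (gwaSubring k Q σ φ x f).mul_mem hmemx ha,
      a + (x : Q) * b, (gwaSubring k Q σ φ x f).add_mem ha
        ((gwaSubring k Q σ φ x f).mul_mem hmemx hb), ?_⟩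
    have hxh : (x : Q) * φ (algebraMap k[X] (RatFunc k) (X - C β))
        = φ (algebraMap k[X] (RatFunc k) (X - C β)) * (x : Q) + (x : Q) := by
      rw [hxψ, show ((X : k[X]) - C β).comp (X + 1) = (X - C β) + 1 by
        simp [sub_comp]; ring]
      rw [map_add, map_one, map_add, map_one, add_mul, one_mul]
    calc (x : Q) * (φ (algebraMap k[X] (RatFunc k) (X - C β)) * a + (x : Q) * b)
        = ((x : Q) * φ (algebraMap k[X] (RatFunc k) (X - C β))) * a
            + (x : Q) * ((x : Q) * b) := by noncomm_ring
      _ = (φ (algebraMap k[X] (RatFunc k) (X - C β)) * (x : Q) + (x : Q)) * a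
            + (x : Q) * ((x : Q) * b) := by rw [hxh]
      _ = φ (algebraMap k[X] (RatFunc k) (X - C β)) * ((x : Q) * a)
            + (x : Q) * (a + (x : Q) * b) := by noncomm_ring
  · -- Y
    intro w hw
    obtain ⟨a, ha, b, hb, rfl⟩ := (hM w).mp hw
    rw [hM]
    refine ⟨gwaY k Q σ φ x f * a
        + φ (algebraMap k[X] (RatFunc k) (g.comp (X - 1))) * b,
      (gwaSubring k Q σ φ x f).add_mem
        ((gwaSubring k Q σ φ x f).mul_mem hmemy ha)
        ((gwaSubring k Q σ φ x f).mul_mem (hmemψ _) hb),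
      0, (gwaSubring k Q σ φ x f).zero_mem, ?_⟩
    have hYx : (((x⁻¹ : Qˣ) : Q) * φ (algebraMap k[X] (RatFunc k) ((X - C (β - 1)) * g)))
          * (x : Q)
        = φ (algebraMap k[X] (RatFunc k) (X - C β))
            * φ (algebraMap k[X] (RatFunc k) (g.comp (X - 1))) := by
      rw [R2, hc2, ← hmul]
    have hYh : (((x⁻¹ : Qˣ) : Q) * φ (algebraMap k[X] (RatFunc k) ((X - C (β - 1)) * g)))
          * φ (algebraMap k[X] (RatFunc k) (X - C β))
        = φ (algebraMap k[X] (RatFunc k) (X - C β)) * gwaY k Q σ φ x f := by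
      rw [mul_assoc, hmul, show ((X : k[X]) - C (β - 1)) * g * (X - C β)
          = (X - C (β - 1)) * f by rw [hfact]; ring]
      rw [← hmul, ← mul_assoc, hxinvψ, hc1, mul_assoc, hyeq]
    calc (((x⁻¹ : Qˣ) : Q) * φ (algebraMap k[X] (RatFunc k) ((X - C (β - 1)) * g)))
          * (φ (algebraMap k[X] (RatFunc k) (X - C β)) * a + (x : Q) * b)
        = ((((x⁻¹ : Qˣ) : Q) * φ (algebraMap k[X] (RatFunc k) ((X - C (β - 1)) * g)))
              * φ (algebraMap k[X] (RatFunc k) (X - C β))) * a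
            + ((((x⁻¹ : Qˣ) : Q) * φ (algebraMap k[X] (RatFunc k) ((X - C (β - 1)) * g)))
              * (x : Q)) * b := by noncomm_ring
      _ = (φ (algebraMap k[X] (RatFunc k) (X - C β)) * gwaY k Q σ φ x f) * a
            + (φ (algebraMap k[X] (RatFunc k) (X - C β))
                * φ (algebraMap k[X] (RatFunc k) (g.comp (X - 1)))) * b := by
          rw [hYh, hYx]
      _ = φ (algebraMap k[X] (RatFunc k) (X - C β))
            * (gwaY k Q σ φ x f * a
                + φ (algebraMap k[X] (RatFunc k) (g.comp (X - 1))) * b)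
            + (x : Q) * 0 := by noncomm_ring
  · -- Z
    intro w hw
    obtain ⟨a, ha, b, hb, rfl⟩ := (hM w).mp hw
    rw [hM]
    refine ⟨φ (algebraMap k[X] (RatFunc k) X) * a,
      (gwaSubring k Q σ φ x f).mul_mem (hmemψ X) ha,
      φ (algebraMap k[X] (RatFunc k) (X - 1)) * b,
      (gwaSubring k Q σ φ x f).mul_mem (hmemψ (X - 1)) hb, ?_⟩
    have hZx : φ (algebraMap k[X] (RatFunc k) X) * (x : Q)
        = (x : Q) * φ (algebraMap k[X] (RatFunc k) (X - 1)) := by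
      rw [hψx, X_comp]
    have hZh : φ (algebraMap k[X] (RatFunc k) X)
          * φ (algebraMap k[X] (RatFunc k) (X - C β))
        = φ (algebraMap k[X] (RatFunc k) (X - C β))
          * φ (algebraMap k[X] (RatFunc k) X) := by
      rw [hmul, hmul, mul_comm]
    calc φ (algebraMap k[X] (RatFunc k) X)
          * (φ (algebraMap k[X] (RatFunc k) (X - C β)) * a + (x : Q) * b)
        = (φ (algebraMap k[X] (RatFunc k) X)
              * φ (algebraMap k[X] (RatFunc k) (X - C β))) * a
            + (φ (algebraMap k[X] (RatFunc k) X) * (x : Q)) * b := by noncomm_ring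
      _ = (φ (algebraMap k[X] (RatFunc k) (X - C β))
              * φ (algebraMap k[X] (RatFunc k) X)) * a
            + ((x : Q) * φ (algebraMap k[X] (RatFunc k) (X - 1))) * b := by
          rw [hZh, hZx]
      _ = φ (algebraMap k[X] (RatFunc k) (X - C β))
            * (φ (algebraMap k[X] (RatFunc k) X) * a)
            + (x : Q) * (φ (algebraMap k[X] (RatFunc k) (X - 1)) * b) := by noncomm_ring
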